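/- Let t ≥ 1 and m ≥ 0, and let H_t^{t+m} be the signed graph consisting of an unbalanced 4-cycle C_4^-, a path P_t one of whose end vertices is joined to a vertex v of C_4^-, and a path P_{t+m} one of whose end vertices is joined to the vertex opposite to v on C_4^-. Then the spectrum of H_t^{t+m} is the multiset {2·cos((2i-1)π/(2(t+m+2))) : i = 1,...,t+m+2} ∪ {2·cos((2i-1)π/(2t+4)) : i = 1,...,t+2}. -/

import Mathlib

/-- Adjacency matrix of the signed graph `H_t^{t+m}`: an unbalanced 4-cycle `C_4⁻` with a
path `P_t` attached to one vertex and a path `P_{t+m}` attached to the opposite vertex.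
The vertices `0, …, 2t+m+2` form a path (vertices `0, …, t-1` are `P_t`, vertex `t` and
vertex `t+2` are opposite vertices of the 4-cycle, vertex `t+1` is a cycle vertex, and
vertices `t+3, …, 2t+m+2` are `P_{t+m}`); the last vertex `2t+m+3` is the fourth cycle
vertex, joined positively to `t` and negatively to `t+2`. -/
def Hmat (t m : ℕ) : Matrix (Fin (2 * t + m + 4)) (Fin (2 * t + m + 4)) ℝ :=
  Matrix.of fun i j =>
    if ((i : ℕ) + 1 = j ∧ (j : ℕ) ≤ 2 * t + m + 2) ∨
        ((j : ℕ) + 1 = i ∧ (i : ℕ) ≤ 2 * t + m + 2) then 1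
    else if ((i : ℕ) = 2 * t + m + 3 ∧ (j : ℕ) = t) ∨
        ((j : ℕ) = 2 * t + m + 3 ∧ (i : ℕ) = t) then 1
    else if ((i : ℕ) = 2 * t + m + 3 ∧ (j : ℕ) = t + 2) ∨
        ((j : ℕ) = 2 * t + m + 3 ∧ (i : ℕ) = t + 2) then -1
    else 0



open Polynomial Real

/-- `qp n = 2 T_n(X/2)`: the monic rescaled Chebyshev polynomial of the first kind. -/
noncomputable def qp : ℕ → Polynomial ℝ
  | 0 => 2
  | 1 => Polynomial.X
  | (n+2) => Polynomial.X * qp (n+1) - qp n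

lemma qp_step (k : ℕ) (p r : ℝ[X]) (hp : p.Monic) (hd : p.natDegree = k+1)
    (hr : r.degree < (k+2 : ℕ)) : (X * p - r).Monic ∧ (X * p - r).natDegree = k+2 := by
  have hxp : (X * p).Monic := monic_X.mul hp
  have hdeg : (X * p).degree = ((k+2 : ℕ) : WithBot ℕ) := by
    have h5 : 1 + (k+1) = k+2 := by omega
    rw [degree_eq_natDegree hxp.ne_zero, natDegree_mul X_ne_zero hp.ne_zero, natDegree_X, hd, h5]
  have hmon : (X * p - r).Monic := by
    rw [sub_eq_add_neg]
    exact hxp.add_of_left (by rwa [degree_neg, hdeg])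
  refine ⟨hmon, ?_⟩
  have := degree_sub_eq_left_of_degree_lt (by rwa [hdeg] : r.degree < (X*p).degree)
  rw [← natDegree_eq_of_degree_eq_some (this.trans hdeg)]

lemma qp_monic_deg : ∀ n : ℕ, (qp (n+1)).Monic ∧ (qp (n+1)).natDegree = n+1
  | 0 => ⟨monic_X, natDegree_X⟩
  | 1 => by
      have h2 : qp 2 = X * qp 1 - qp 0 := rfl
      rw [h2]
      exact qp_step 0 _ _ monic_X natDegree_X (by
        show (2 : ℝ[X]).degree < _
        have : (2 : ℝ[X]).degree ≤ 0 := degree_C_le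
        exact this.trans_lt (by norm_num))
  | (n+2) => by
      have h2 : qp (n+3) = X * qp (n+2) - qp (n+1) := rfl
      obtain ⟨h1m, h1d⟩ := qp_monic_deg (n+1)
      obtain ⟨h0m, h0d⟩ := qp_monic_deg n
      rw [h2]
      refine qp_step (n+1) _ _ h1m h1d ?_
      rw [degree_eq_natDegree h0m.ne_zero, h0d]
      exact_mod_cast by omega

lemma qp_eval_cos (θ : ℝ) : ∀ n : ℕ, (qp n).eval (2 * Real.cos θ) = 2 * Real.cos (n * θ)
  | 0 => by simp [qp]
  | 1 => by simp [qp]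
  | (n+2) => by
      have h2 : qp (n+2) = X * qp (n+1) - qp n := rfl
      rw [h2]
      simp only [eval_sub, eval_mul, eval_X, qp_eval_cos θ (n+1), qp_eval_cos θ n]
      have e1 : ((n:ℝ)+2) * θ = ((n:ℝ)+1) * θ + θ := by ring
      have e2 : (n:ℝ) * θ = ((n:ℝ)+1) * θ - θ := by ring
      push_cast
      rw [e1, e2, Real.cos_add, Real.cos_sub]
      ring

lemma qp_eq_prod (n : ℕ) (hn : 1 ≤ n) :
    qp n = ∏ i ∈ Finset.range n,
      (X - C (2 * Real.cos ((2 * (i:ℝ) + 1) * Real.pi / (2 * (n:ℝ))))) := by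
  obtain ⟨k, rfl⟩ := Nat.exists_eq_add_of_le hn
  set n := 1 + k with hn'
  set r : ℕ → ℝ := fun i => 2 * Real.cos ((2 * (i:ℝ) + 1) * Real.pi / (2 * (n:ℝ))) with hr
  have hnpos : (0:ℝ) < n := by positivity
  -- angles
  have hang : ∀ i ∈ Finset.range n, (2 * (i:ℝ) + 1) * Real.pi / (2 * (n:ℝ)) ∈ Set.Icc 0 Real.pi := by
    intro i hi
    simp only [Finset.mem_range] at hi
    constructor
    · positivity
    · rw [div_le_iff₀ (by positivity)]
      have : (2 * (i:ℝ) + 1) ≤ 2 * (n:ℝ) := by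
        have : (i:ℝ) + 1 ≤ (n:ℝ) := by exact_mod_cast hi
        linarith
      nlinarith [Real.pi_pos]
  have hinj : Set.InjOn r (Finset.range n) := by
    intro i hi j hj hij
    have h1 := hang i hi; have h2 := hang j hj
    have hcos : Real.cos ((2 * (i:ℝ) + 1) * Real.pi / (2 * (n:ℝ))) =
        Real.cos ((2 * (j:ℝ) + 1) * Real.pi / (2 * (n:ℝ))) := by
      have := hij
      rw [hr] at this
      simp only at this
      linarith
    have := Real.injOn_cos ⟨h1.1, h1.2⟩ ⟨h2.1, h2.2⟩ hcos
    have hne : (2*(n:ℝ)) ≠ 0 := by positivity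
    have h3 : (2*(i:ℝ)+1) * Real.pi = (2*(j:ℝ)+1) * Real.pi := by
      have h5 := congrArg (· * (2*(n:ℝ))) this
      simpa [div_mul_cancel₀, hne] using h5
    have h4 : (2*(i:ℝ)+1) = (2*(j:ℝ)+1) := mul_right_cancel₀ Real.pi_ne_zero h3
    have hi' : (i:ℝ) = (j:ℝ) := by linarith
    exact_mod_cast hi'
  have hroot : ∀ i ∈ Finset.range n, (qp n).eval (r i) = 0 := by
    intro i hi
    rw [hr]
    simp only
    rw [qp_eval_cos]
    have : (n:ℝ) * ((2 * (i:ℝ) + 1) * Real.pi / (2 * (n:ℝ))) = (2 * (i:ℝ) + 1) * Real.pi / 2 := by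
      field_simp
    rw [this]
    have : (2 * (i:ℝ) + 1) * Real.pi / 2 = (2 * (i:ℝ) + 1) * (Real.pi / 2) := by ring
    rw [this, Real.cos_eq_zero_iff.mpr ⟨(i:ℤ), by push_cast; ring⟩, mul_zero]
  -- divisibility
  have hdvd : (∏ i ∈ Finset.range n, (X - C (r i))) ∣ qp n := by
    refine Finset.prod_dvd_of_coprime ?_ (fun i hi => (dvd_iff_isRoot).mpr (hroot i hi))
    intro i hi j hj hij
    have : r i ≠ r j := fun h => hij (hinj hi hj h)
    exact isCoprime_X_sub_C_of_isUnit_sub ((sub_ne_zero.2 this).isUnit)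
  -- both monic of same degree
  obtain ⟨hm, hd⟩ := qp_monic_deg k
  have hm' : (qp n).Monic := by rwa [hn', Nat.add_comm 1 k]
  have hd' : (qp n).natDegree = n := by rw [hn', Nat.add_comm 1 k]; exact hd
  have hpm : (∏ i ∈ Finset.range n, (X - C (r i))).Monic :=
    monic_prod_of_monic _ _ (fun i _ => monic_X_sub_C _)
  have hpd : (∏ i ∈ Finset.range n, (X - C (r i))).natDegree = n := by
    rw [natDegree_prod _ _ (fun i _ => (monic_X_sub_C (r i)).ne_zero)]
    simp [natDegree_X_sub_C]
  obtain ⟨c, hc⟩ := hdvd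
  have hc0 : c ≠ 0 := by
    rintro rfl; rw [mul_zero] at hc; exact hm'.ne_zero hc
  have hcd : c.natDegree = 0 := by
    have := hc ▸ hd'
    rw [natDegree_mul hpm.ne_zero hc0, hpd] at this
    omega
  have hcm : c = 1 := by
    have hlc := congrArg leadingCoeff hc
    rw [hm'.leadingCoeff, leadingCoeff_mul, hpm.leadingCoeff, one_mul] at hlc
    have hcc : c = C (c.leadingCoeff) := by
      conv_lhs => rw [eq_C_of_natDegree_eq_zero hcd]
      rw [leadingCoeff, hcd]
    rw [hcc, ← hlc, map_one]
  rw [hc, hcm, mul_one]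

open Matrix

noncomputable def s2 : ℝ := Real.sqrt 2

lemma s2_sq : s2 * s2 = 2 := Real.mul_self_sqrt (by norm_num)

/-- tridiagonal path matrix on `n+2` vertices whose last edge has weight `√2`. -/
noncomputable def Dmat (n : ℕ) : Matrix (Fin (n+2)) (Fin (n+2)) ℝ :=
  Matrix.of fun i j =>
    if ((i:ℕ)+1 = j ∨ (j:ℕ)+1 = i) then (if (i:ℕ)+(j:ℕ) = 2*n+1 then s2 else 1) else 0

-- entries of the charmatrix
lemma charm_apply (n : ℕ) (i j : Fin (n+2)) :
    charmatrix (Dmat n) i j =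
      if i = j then X
      else if ((i:ℕ)+1 = j ∨ (j:ℕ)+1 = i) then
        (if (i:ℕ)+(j:ℕ) = 2*n+1 then -C s2 else -C 1) else 0 := by
  by_cases h : i = j
  · subst h
    simp [charmatrix_apply_eq, Dmat]
  · rw [charmatrix_apply_ne _ _ _ h]
    simp only [Dmat, Matrix.of_apply]
    split_ifs with h1 h2 <;> simp [h]

lemma subm1 (n : ℕ) :
    (charmatrix (Dmat (n+1))).submatrix Fin.succ Fin.succ = charmatrix (Dmat n) := by
  ext i j
  rw [Matrix.submatrix_apply, charm_apply, charm_apply]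
  have hij : i.succ = j.succ ↔ i = j := by
    constructor
    · exact fun h => Fin.succ_injective _ h
    · rintro rfl; rfl
  simp only [Fin.val_succ]
  split_ifs with h1 h2 h3 h4 h5 h6 h7 <;>
    first
      | rfl
      | (exact absurd (hij.mp h1) h3)
      | (exact absurd (hij.mpr h1) ‹_›)
      | omega

lemma subm2 (n : ℕ) :
    (charmatrix (Dmat (n+2))).submatrix (fun i : Fin (n+2) => i.succ.succ)
      (fun j : Fin (n+2) => j.succ.succ) = charmatrix (Dmat n) := by
  ext i j
  rw [Matrix.submatrix_apply, charm_apply, charm_apply]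
  have hij : i.succ.succ = j.succ.succ ↔ i = j := by
    constructor
    · exact fun h => Fin.succ_injective _ (Fin.succ_injective _ h)
    · rintro rfl; rfl
  simp only [Fin.val_succ]
  split_ifs with h1 h2 h3 h4 h5 h6 h7 <;>
    first
      | rfl
      | (exact absurd (hij.mp h1) h3)
      | (exact absurd (hij.mpr h1) ‹_›)
      | omega

lemma sA1_zero (n : ℕ) : (1 : Fin (n+4)).succAbove (0 : Fin (n+3)) = 0 := by
  rw [Fin.succAbove_of_castSucc_lt]
  · rfl
  · rw [Fin.lt_def]
    simp

lemma sA1_succ (n : ℕ) (k : Fin (n+2)) :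
    (1 : Fin (n+4)).succAbove k.succ = k.succ.succ := by
  rw [Fin.succAbove_of_le_castSucc]
  rw [Fin.le_def]
  simp

lemma entry00 (n : ℕ) : charmatrix (Dmat n) 0 0 = X := by
  rw [charm_apply]; simp

lemma entry01 (n : ℕ) : charmatrix (Dmat (n+2)) 0 1 = -C 1 := by
  rw [charm_apply]
  have h0 : ((0 : Fin (n+4)) : ℕ) = 0 := rfl
  have h1 : ((1 : Fin (n+4)) : ℕ) = 1 := rfl
  rw [if_neg (by simp [Fin.ext_iff, h0, h1]), if_pos (by omega), if_neg (by omega)]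

lemma entry10 (n : ℕ) : charmatrix (Dmat (n+2)) 1 0 = -C 1 := by
  rw [charm_apply]
  have h0 : ((0 : Fin (n+4)) : ℕ) = 0 := rfl
  have h1 : ((1 : Fin (n+4)) : ℕ) = 1 := rfl
  rw [if_neg (by simp [Fin.ext_iff, h0, h1]), if_pos (by omega), if_neg (by omega)]

lemma entry0ss (n : ℕ) (j : Fin (n+2)) : charmatrix (Dmat (n+2)) 0 j.succ.succ = 0 := by
  rw [charm_apply]
  have h0 : ((0 : Fin (n+4)) : ℕ) = 0 := rfl
  have hj : ((j.succ.succ : Fin (n+4)) : ℕ) = (j:ℕ)+2 := rfl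
  rw [if_neg (by rw [Fin.ext_iff, h0, hj]; omega), if_neg (by omega)]

lemma entryss0 (n : ℕ) (j : Fin (n+2)) : charmatrix (Dmat (n+2)) j.succ.succ 0 = 0 := by
  rw [charm_apply]
  have h0 : ((0 : Fin (n+4)) : ℕ) = 0 := rfl
  have hj : ((j.succ.succ : Fin (n+4)) : ℕ) = (j:ℕ)+2 := rfl
  rw [if_neg (by rw [Fin.ext_iff, h0, hj]; omega), if_neg (by omega)]

lemma detD : ∀ n : ℕ, (charmatrix (Dmat n)).det = qp (n+2)
  | 0 => by
      rw [Matrix.det_fin_two]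
      rw [charm_apply, charm_apply, charm_apply, charm_apply]
      have h2 : qp 2 = X * qp 1 - qp 0 := rfl
      have h1 : ((1 : Fin 2) : ℕ) = 1 := rfl
      have h0 : ((0 : Fin 2) : ℕ) = 0 := rfl
      norm_num [Fin.ext_iff, h1, h0]
      rw [h2]
      have hC : (C s2) * (C s2) = (2:ℝ[X]) := by rw [← C_mul, s2_sq]; exact map_ofNat C 2
      simp [qp, hC]
  | 1 => by
      rw [Matrix.det_fin_three]
      simp only [charm_apply]
      have h0 : ((0 : Fin 3) : ℕ) = 0 := rfl
      have h1 : ((1 : Fin 3) : ℕ) = 1 := rfl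
      have h2 : ((2 : Fin 3) : ℕ) = 2 := rfl
      norm_num [Fin.ext_iff, h0, h1, h2]
      have hq : qp 3 = X * (X * X - 2) - X := rfl
      have : (C s2) * (C s2) = C 2 := by rw [← C_mul, s2_sq]
      have hC : (C s2)^2 = (2:ℝ[X]) := by
        rw [sq, ← C_mul, s2_sq]; exact map_ofNat C 2
      rw [hq]
      ring_nf
      rw [hC]
      ring
  | (n+2) => by
      rw [Matrix.det_succ_row_zero, Fin.sum_univ_succ, Fin.sum_univ_succ]
      have hrest : ∀ j : Fin (n+2),
          ((-1:ℝ[X]))^((j.succ.succ : Fin (n+4)) : ℕ) *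
            charmatrix (Dmat (n+2)) 0 j.succ.succ *
            ((charmatrix (Dmat (n+2))).submatrix Fin.succ (j.succ.succ).succAbove).det = 0 := by
        intro j
        rw [entry0ss]
        ring
      rw [Finset.sum_congr rfl (fun j _ => hrest j), Finset.sum_const_zero, add_zero]
      have IH1 := detD (n+1)
      have IH0 := detD n
      have hs0 : Fin.succ (0 : Fin (n+3)) = (1 : Fin (n+4)) := rfl
      rw [hs0]
      have hzsA : ((0:Fin (n+4)).succAbove : Fin (n+3) → Fin (n+4)) = Fin.succ :=
        funext fun k => Fin.zero_succAbove k
      have hsub0 : (charmatrix (Dmat (n+2))).submatrix Fin.succ ((0:Fin (n+4)).succAbove)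
          = charmatrix (Dmat (n+1)) := by
        rw [hzsA]; exact subm1 (n+1)
      have hdetB : ((charmatrix (Dmat (n+2))).submatrix Fin.succ
          ((1:Fin (n+4)).succAbove)).det = (-C 1) * qp (n+2) := by
        set B := (charmatrix (Dmat (n+2))).submatrix Fin.succ ((1:Fin (n+4)).succAbove) with hB
        rw [Matrix.det_succ_column_zero, Fin.sum_univ_succ]
        have hrest2 : ∀ i : Fin (n+2), ((-1:ℝ[X]))^(((i.succ : Fin (n+3))):ℕ) * B i.succ 0 *
            (B.submatrix (i.succ).succAbove Fin.succ).det = 0 := by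
          intro i
          have hz : B i.succ 0 = 0 := by
            rw [hB, Matrix.submatrix_apply, sA1_zero]
            exact entryss0 n i
          rw [hz]; ring
        rw [Finset.sum_congr rfl (fun i _ => hrest2 i), Finset.sum_const_zero, add_zero]
        have hB00 : B 0 0 = -C 1 := by
          rw [hB, Matrix.submatrix_apply, sA1_zero]
          exact entry10 n
        have hsub2 : B.submatrix ((0:Fin (n+3)).succAbove) Fin.succ = charmatrix (Dmat n) := by
          rw [hB, Matrix.submatrix_submatrix]
          have hrow : (Fin.succ ∘ (0:Fin (n+3)).succAbove : Fin (n+2) → Fin (n+4))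
              = fun i => i.succ.succ :=
            funext fun k => by rw [Function.comp_apply, Fin.zero_succAbove]
          have hcol : (((1:Fin (n+4)).succAbove ∘ Fin.succ) : Fin (n+2) → Fin (n+4))
              = fun j => j.succ.succ :=
            funext fun k => by rw [Function.comp_apply, sA1_succ]
          rw [hrow, hcol]
          exact subm2 n
        rw [hB00, hsub2, IH0]
        simp
      rw [hsub0, IH1, hdetB, entry00, entry01]
      have hq : qp (n+4) = X * qp (n+3) - qp (n+2) := rfl
      rw [hq]
      have c0 : (((0:Fin (n+4))):ℕ) = 0 := rfl
      have c1 : (((1:Fin (n+4))):ℕ) = 1 := rfl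
      rw [c0, c1]
      simp
      ring

noncomputable section

def av : ℝ := s2 / 2

variable (t m : ℕ)

def pF : Fin (2*t+m+4) := ⟨t+1, by omega⟩
def qF : Fin (2*t+m+4) := ⟨2*t+m+3, by omega⟩

lemma pv : ((pF t m : Fin (2*t+m+4))) = (⟨t+1, by omega⟩ : Fin (2*t+m+4)) := rfl
lemma pval : ((pF t m) : ℕ) = t+1 := rfl
lemma qval : ((qF t m) : ℕ) = 2*t+m+3 := rfl
lemma pF_ne_qF : pF t m ≠ qF t m := by
  simp [Fin.ext_iff, pval, qval]; omega

def Omat : Matrix (Fin (2*t+m+4)) (Fin (2*t+m+4)) ℝ :=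
  Matrix.of fun i j =>
    if i = pF t m ∧ j = pF t m then av
    else if i = pF t m ∧ j = qF t m then av
    else if i = qF t m ∧ j = pF t m then av
    else if i = qF t m ∧ j = qF t m then -av
    else if i = j then 1 else 0

lemma O_row_p (k : Fin (2*t+m+4)) :
    Omat t m (pF t m) k = (if k = pF t m then av else 0) + (if k = qF t m then av else 0) := by
  simp only [Omat, Matrix.of_apply]
  split_ifs with h1 h2 h3 h4 h5
  any_goals ring
  all_goals (exfalso; simp only [Fin.ext_iff, pval, qval, true_and] at *)
  all_goals omega

lemma O_row_q (k : Fin (2*t+m+4)) :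
    Omat t m (qF t m) k = (if k = pF t m then av else 0) - (if k = qF t m then av else 0) := by
  simp only [Omat, Matrix.of_apply]
  split_ifs with h1 h2 h3 h4 h5
  any_goals ring
  all_goals (exfalso; simp only [Fin.ext_iff, pval, qval, true_and] at *)
  all_goals omega

lemma O_row_other (i k : Fin (2*t+m+4)) (h1 : (i:ℕ) ≠ t+1) (h2 : (i:ℕ) ≠ 2*t+m+3) :
    Omat t m i k = if k = i then 1 else 0 := by
  simp only [Omat, Matrix.of_apply]
  have hp : i ≠ pF t m := by simp [Fin.ext_iff, pval]; omega
  have hq : i ≠ qF t m := by simp [Fin.ext_iff, qval]; omega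
  simp [hp, hq, eq_comm]

lemma O_mul (A : Matrix (Fin (2*t+m+4)) (Fin (2*t+m+4)) ℝ) (i j : Fin (2*t+m+4)) :
    (Omat t m * A) i j =
      if (i:ℕ) = t+1 then av * A (pF t m) j + av * A (qF t m) j
      else if (i:ℕ) = 2*t+m+3 then av * A (pF t m) j - av * A (qF t m) j
      else A i j := by
  rw [Matrix.mul_apply]
  split_ifs with h1 h2
  · have : i = pF t m := by simp [Fin.ext_iff, pval, h1]
    subst this
    simp only [O_row_p, add_mul, ite_mul, zero_mul]
    rw [Finset.sum_add_distrib, Finset.sum_ite_eq' Finset.univ (pF t m) (fun k => av * A k j),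
      Finset.sum_ite_eq' Finset.univ (qF t m) (fun k => av * A k j)]
    simp
  · have : i = qF t m := by simp [Fin.ext_iff, qval, h2]
    subst this
    simp only [O_row_q, sub_mul, ite_mul, zero_mul]
    rw [Finset.sum_sub_distrib, Finset.sum_ite_eq' Finset.univ (pF t m) (fun k => av * A k j),
      Finset.sum_ite_eq' Finset.univ (qF t m) (fun k => av * A k j)]
    simp
  · simp only [O_row_other t m i _ h1 h2, ite_mul, zero_mul]
    rw [Finset.sum_ite_eq' Finset.univ i (fun k => 1 * A k j)]
    simp

lemma mul_O (A : Matrix (Fin (2*t+m+4)) (Fin (2*t+m+4)) ℝ) (i j : Fin (2*t+m+4)) :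
    (A * Omat t m) i j =
      if (j:ℕ) = t+1 then av * A i (pF t m) + av * A i (qF t m)
      else if (j:ℕ) = 2*t+m+3 then av * A i (pF t m) - av * A i (qF t m)
      else A i j := by
  rw [Matrix.mul_apply]
  have hsym : ∀ k l, Omat t m k l = Omat t m l k := by
    intro k l
    simp only [Omat, Matrix.of_apply]
    by_cases hk : k = pF t m <;> by_cases hl : l = pF t m <;>
      by_cases hk2 : k = qF t m <;> by_cases hl2 : l = qF t m <;>
      simp only [hk, hl, hk2, hl2, pF_ne_qF, and_true, true_and, and_false, false_and,
        if_true, if_false, ite_true, ite_false, not_false_iff] <;>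
      first
        | rfl
        | (exfalso; simp only [Fin.ext_iff, pval, qval, true_and] at *; omega)
        | (simp [Ne.symm (pF_ne_qF t m), pF_ne_qF t m, hk, hl, hk2, hl2, eq_comm])
  split_ifs with h1 h2
  · have : j = pF t m := by simp [Fin.ext_iff, pval, h1]
    subst this
    simp only [fun k => hsym k (pF t m)]
    simp only [O_row_p, mul_add, mul_ite, mul_zero]
    rw [Finset.sum_add_distrib, Finset.sum_ite_eq' Finset.univ (pF t m) (fun k => A i k * av),
      Finset.sum_ite_eq' Finset.univ (qF t m) (fun k => A i k * av)]
    simp [mul_comm]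
  · have : j = qF t m := by simp [Fin.ext_iff, qval, h2]
    subst this
    simp only [fun k => hsym k (qF t m)]
    simp only [O_row_q, mul_sub, mul_ite, mul_zero]
    rw [Finset.sum_sub_distrib, Finset.sum_ite_eq' Finset.univ (pF t m) (fun k => A i k * av),
      Finset.sum_ite_eq' Finset.univ (qF t m) (fun k => A i k * av)]
    simp [mul_comm]
  · simp only [fun k => hsym k j]
    simp only [O_row_other t m j _ h1 h2, mul_ite, mul_zero]
    rw [Finset.sum_ite_eq' Finset.univ j (fun k => A i k * 1)]
    simp

lemma O_mul_O : Omat t m * Omat t m = 1 := by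
  ext i j
  have h2av : av * av + av * av = 1 := by
    simp only [av]
    nlinarith [s2_sq]
  rw [O_mul, Matrix.one_apply]
  by_cases h1 : (i:ℕ) = t+1
  · rw [if_pos h1, O_row_p, O_row_q]
    by_cases hj1 : j = pF t m
    · have hj2 : j ≠ qF t m := by rw [hj1]; exact pF_ne_qF t m
      have hij : i = j := Fin.val_injective (by rw [hj1, pval, h1])
      rw [if_pos hj1, if_neg hj2, if_pos hij]
      linear_combination h2av
    · by_cases hj2 : j = qF t m
      · have hij : i ≠ j := by
          intro h
          rw [h, hj2, qval] at h1
          omega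
        rw [if_pos hj2, if_neg hj1, if_neg hij]
        ring
      · have hij : i ≠ j := by
          intro h
          exact hj1 (by rw [← h]; exact Fin.val_injective (by rw [pval, h1]))
        rw [if_neg hj1, if_neg hj2, if_neg hij]
        ring
  · by_cases h2 : (i:ℕ) = 2*t+m+3
    · rw [if_neg h1, if_pos h2, O_row_p, O_row_q]
      by_cases hj1 : j = pF t m
      · have hj2 : j ≠ qF t m := by rw [hj1]; exact pF_ne_qF t m
        have hij : i ≠ j := by
          intro h
          rw [h, hj1, pval] at h2
          omega
        rw [if_pos hj1, if_neg hj2, if_neg hij]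
        ring
      · by_cases hj2 : j = qF t m
        · have hij : i = j := Fin.val_injective (by rw [hj2, qval, h2])
          rw [if_pos hj2, if_neg hj1, if_pos hij]
          linear_combination h2av
        · have hij : i ≠ j := by
            intro h
            exact hj2 (by rw [← h]; exact Fin.val_injective (by rw [qval, h2]))
          rw [if_neg hj1, if_neg hj2, if_neg hij]
          ring
    · rw [if_neg h1, if_neg h2, O_row_other t m i j h1 h2]
      by_cases hij : i = j
      · rw [if_pos hij.symm, if_pos hij]
      · rw [if_neg (fun h => hij h.symm), if_neg hij]


lemma H_p_row (j : Fin (2*t+m+4)) :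
    Hmat t m (pF t m) j = if (j:ℕ) = t ∨ (j:ℕ) = t+2 then 1 else 0 := by
  have hj := j.isLt
  simp only [Hmat, Matrix.of_apply, true_and, and_true]
  rw [pval]
  split_ifs
  any_goals rfl
  all_goals (exfalso; omega)

lemma H_q_row (j : Fin (2*t+m+4)) :
    Hmat t m (qF t m) j = if (j:ℕ) = t then 1 else if (j:ℕ) = t+2 then -1 else 0 := by
  have hj := j.isLt
  simp only [Hmat, Matrix.of_apply, qval, true_and, and_true]
  split_ifs
  any_goals rfl
  all_goals (exfalso; omega)

lemma H_p_col (i : Fin (2*t+m+4)) :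
    Hmat t m i (pF t m) = if (i:ℕ) = t ∨ (i:ℕ) = t+2 then 1 else 0 := by
  have hi := i.isLt
  simp only [Hmat, Matrix.of_apply, true_and, and_true]
  rw [pval]
  split_ifs
  any_goals rfl
  all_goals (exfalso; omega)

lemma H_q_col (i : Fin (2*t+m+4)) :
    Hmat t m i (qF t m) = if (i:ℕ) = t then 1 else if (i:ℕ) = t+2 then -1 else 0 := by
  have hi := i.isLt
  simp only [Hmat, Matrix.of_apply, qval, true_and, and_true]
  split_ifs
  any_goals rfl
  all_goals (exfalso; omega)

def Emat : Matrix (Fin (2*t+m+4)) (Fin (2*t+m+4)) ℝ :=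
  Matrix.of fun i j =>
    if ((i:ℕ)+1 = j ∨ (j:ℕ)+1 = i) ∧ (i:ℕ)+(j:ℕ) ≠ 2*t+3 ∧ (i:ℕ) ≤ 2*t+m+2 ∧ (j:ℕ) ≤ 2*t+m+2
      then (if (i:ℕ)+(j:ℕ) = 2*t+1 then s2 else 1)
    else if ((i:ℕ) = 2*t+m+3 ∧ (j:ℕ) = t+2) ∨ ((j:ℕ) = 2*t+m+3 ∧ (i:ℕ) = t+2) then s2
    else 0

set_option maxHeartbeats 2000000 in
lemma OHO : Omat t m * Hmat t m * Omat t m = Emat t m := by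
  ext i j
  have hi := i.isLt
  have hj := j.isLt
  rw [Matrix.mul_assoc, O_mul]
  simp only [mul_O]
  simp only [H_p_row, H_q_row, H_p_col, H_q_col]
  rw [pval, qval]
  simp only [Hmat, Emat, Matrix.of_apply, true_and, and_true]
  have hs : av + av = s2 := by simp only [av]; ring
  split_ifs
  any_goals rfl
  any_goals (simp only [av]; ring)
  all_goals (exfalso; omega)


def σfun : Fin (t+2) ⊕ Fin (t+m+2) → Fin (2*t+m+4)
  | Sum.inl k => ⟨(k:ℕ), by have := k.isLt; omega⟩
  | Sum.inr k => if (k:ℕ) ≤ t+m then ⟨2*t+m+2 - (k:ℕ), by omega⟩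
      else ⟨2*t+m+3, by omega⟩

def σinv (i : Fin (2*t+m+4)) : Fin (t+2) ⊕ Fin (t+m+2) :=
  if h1 : (i:ℕ) ≤ t+1 then Sum.inl ⟨(i:ℕ), by omega⟩
  else if h2 : (i:ℕ) = 2*t+m+3 then Sum.inr ⟨t+m+1, by omega⟩
  else Sum.inr ⟨2*t+m+2 - (i:ℕ), by have := i.isLt; omega⟩

def σe : Fin (t+2) ⊕ Fin (t+m+2) ≃ Fin (2*t+m+4) where
  toFun := σfun t m
  invFun := σinv t m
  left_inv := by
    rintro (k | k) <;> have hk := k.isLt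
    · have hval : ((σfun t m (Sum.inl k)) : ℕ) = (k:ℕ) := by simp only [σfun]
      unfold σinv
      rw [dif_pos (by rw [hval]; omega)]
      simp only [Sum.inl.injEq, Fin.ext_iff, Fin.val_mk]
      rw [hval]
    · unfold σinv
      by_cases h : (k:ℕ) ≤ t+m
      · have hval : ((σfun t m (Sum.inr k)) : ℕ) = 2*t+m+2 - (k:ℕ) := by
          simp only [σfun, if_pos h]
        rw [dif_neg (by rw [hval]; omega), dif_neg (by rw [hval]; omega)]
        simp only [Sum.inr.injEq, Fin.ext_iff, Fin.val_mk]
        rw [hval]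
        omega
      · have hval : ((σfun t m (Sum.inr k)) : ℕ) = 2*t+m+3 := by
          simp only [σfun, if_neg h]
        rw [dif_neg (by rw [hval]; omega), dif_pos (by rw [hval])]
        simp only [Sum.inr.injEq, Fin.ext_iff, Fin.val_mk]
        omega
  right_inv := by
    intro i
    have hi := i.isLt
    unfold σinv
    by_cases h1 : (i:ℕ) ≤ t+1
    · rw [dif_pos h1]
      simp only [σfun, Fin.ext_iff, Fin.val_mk]
    · by_cases h2 : (i:ℕ) = 2*t+m+3
      · rw [dif_neg h1, dif_pos h2]
        simp only [σfun]
        rw [if_neg (by show ¬(t+m+1 ≤ t+m); omega)]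
        simp only [Fin.ext_iff, Fin.val_mk]
        omega
      · rw [dif_neg h1, dif_neg h2]
        simp only [σfun]
        rw [if_pos (by show 2*t+m+2 - (i:ℕ) ≤ t+m; omega)]
        simp only [Fin.ext_iff, Fin.val_mk]
        omega

lemma E_reindex :
    Emat t m = Matrix.reindex (σe t m) (σe t m)
      (Matrix.fromBlocks (Dmat t) 0 0 (Dmat (t+m))) := by
  ext i j
  have hi := i.isLt
  have hj := j.isLt
  rw [Matrix.reindex_apply, Matrix.submatrix_apply]
  have hsymm : ∀ (x : Fin (2*t+m+4)), (σe t m).symm x = σinv t m x := fun x => rfl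
  rw [hsymm i, hsymm j]
  simp only [σinv]
  by_cases hi1 : (i:ℕ) ≤ t+1 <;> by_cases hj1 : (j:ℕ) ≤ t+1
  · rw [dif_pos hi1, dif_pos hj1, Matrix.fromBlocks_apply₁₁]
    simp only [Emat, Dmat, Matrix.of_apply]
    split_ifs <;> first | rfl | (exfalso; omega)
  · rw [dif_pos hi1]
    by_cases hj2 : (j:ℕ) = 2*t+m+3
    · rw [dif_neg hj1, dif_pos hj2, Matrix.fromBlocks_apply₁₂]
      simp only [Emat, Matrix.of_apply, Matrix.zero_apply]
      split_ifs <;> first | rfl | (exfalso; omega)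
    · rw [dif_neg hj1, dif_neg hj2, Matrix.fromBlocks_apply₁₂]
      simp only [Emat, Matrix.of_apply, Matrix.zero_apply]
      split_ifs <;> first | rfl | (exfalso; omega)
  · rw [dif_pos hj1]
    by_cases hi2 : (i:ℕ) = 2*t+m+3
    · rw [dif_neg hi1, dif_pos hi2, Matrix.fromBlocks_apply₂₁]
      simp only [Emat, Matrix.of_apply, Matrix.zero_apply]
      split_ifs <;> first | rfl | (exfalso; omega)
    · rw [dif_neg hi1, dif_neg hi2, Matrix.fromBlocks_apply₂₁]
      simp only [Emat, Matrix.of_apply, Matrix.zero_apply]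
      split_ifs <;> first | rfl | (exfalso; omega)
  · by_cases hi2 : (i:ℕ) = 2*t+m+3 <;> by_cases hj2 : (j:ℕ) = 2*t+m+3
    · rw [dif_neg hi1, dif_pos hi2, dif_neg hj1, dif_pos hj2, Matrix.fromBlocks_apply₂₂]
      simp only [Emat, Dmat, Matrix.of_apply]
      split_ifs <;> first | rfl | (exfalso; omega)
    · rw [dif_neg hi1, dif_pos hi2, dif_neg hj1, dif_neg hj2, Matrix.fromBlocks_apply₂₂]
      simp only [Emat, Dmat, Matrix.of_apply]
      split_ifs <;> first | rfl | (exfalso; omega)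
    · rw [dif_neg hi1, dif_neg hi2, dif_neg hj1, dif_pos hj2, Matrix.fromBlocks_apply₂₂]
      simp only [Emat, Dmat, Matrix.of_apply]
      split_ifs <;> first | rfl | (exfalso; omega)
    · rw [dif_neg hi1, dif_neg hi2, dif_neg hj1, dif_neg hj2, Matrix.fromBlocks_apply₂₂]
      simp only [Emat, Dmat, Matrix.of_apply]
      split_ifs <;> first | rfl | (exfalso; omega)


lemma charpoly_conj {n : Type*} [Fintype n] [DecidableEq n] (P A Q : Matrix n n ℝ)
    (h : P * Q = 1) : (P * A * Q).charpoly = A.charpoly := by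
  have hmapPQ : (P.map (Polynomial.C)) * (Q.map (Polynomial.C)) = 1 := by
    rw [← Matrix.map_mul, h]
    simp
  have key : Matrix.charmatrix (P * A * Q) =
      (P.map (Polynomial.C)) * Matrix.charmatrix A * (Q.map (Polynomial.C)) := by
    unfold Matrix.charmatrix
    rw [Matrix.mul_sub, Matrix.sub_mul]
    congr 1
    · -- scalar part
      have hsc : (Matrix.scalar n) (X : ℝ[X]) = (X : ℝ[X]) • (1 : Matrix n n ℝ[X]) := by
        ext i j
        by_cases hij : i = j <;>
          simp [Matrix.scalar_apply, Matrix.one_apply, Matrix.diagonal, hij]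
      rw [hsc, Matrix.mul_smul, mul_one, Matrix.smul_mul, hmapPQ]
    · simp only [RingHom.mapMatrix_apply]
      rw [← Matrix.map_mul, ← Matrix.map_mul]
  rw [Matrix.charpoly, Matrix.charpoly, key, Matrix.det_mul, Matrix.det_mul]
  have hdet : (P.map (Polynomial.C)).det * (Q.map (Polynomial.C)).det = 1 := by
    rw [← Matrix.det_mul, hmapPQ, Matrix.det_one]
  calc (P.map (Polynomial.C)).det * (Matrix.charmatrix A).det * (Q.map (Polynomial.C)).det
      = ((P.map (Polynomial.C)).det * (Q.map (Polynomial.C)).det) * (Matrix.charmatrix A).det := by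
        ring
    _ = (Matrix.charmatrix A).det := by rw [hdet, one_mul]

end

/-- The spectrum of `H_t^{t+m}` is `{2 cos((2i-1)π/(2(t+m+2))) : i = 1, …, t+m+2}`
together with `{2 cos((2i-1)π/(2t+4)) : i = 1, …, t+2}`. -/
theorem eigenvalues_Hmat (t m : ℕ) (ht : 1 ≤ t) :
    (Hmat t m).charpoly =
      (∏ i ∈ Finset.range (t + m + 2),
        (Polynomial.X - Polynomial.C
          (2 * Real.cos ((2 * (i : ℝ) + 1) * Real.pi / (2 * ((t : ℝ) + (m : ℝ) + 2)))))) *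
      (∏ i ∈ Finset.range (t + 2),
        (Polynomial.X - Polynomial.C
          (2 * Real.cos ((2 * (i : ℝ) + 1) * Real.pi / (2 * (t : ℝ) + 4))))) := by
  have h1 : (Hmat t m).charpoly = (Emat t m).charpoly := by
    have h := charpoly_conj (Omat t m) (Hmat t m) (Omat t m) (O_mul_O t m)
    rw [OHO t m] at h
    exact h.symm
  have hD : ∀ n : ℕ, (Dmat n).charpoly = qp (n+2) := fun n => detD n
  have e1 : ∏ i ∈ Finset.range (t+m+2),
      (Polynomial.X - Polynomial.C
        (2 * Real.cos ((2 * (i : ℝ) + 1) * Real.pi / (2 * ((t : ℝ) + (m : ℝ) + 2)))))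
      = qp (t+m+2) := by
    rw [qp_eq_prod (t+m+2) (by omega)]
    apply Finset.prod_congr rfl
    intro i _
    congr 3
    push_cast
    ring
  have e2 : ∏ i ∈ Finset.range (t+2),
      (Polynomial.X - Polynomial.C
        (2 * Real.cos ((2 * (i : ℝ) + 1) * Real.pi / (2 * (t : ℝ) + 4))))
      = qp (t+2) := by
    rw [qp_eq_prod (t+2) (by omega)]
    apply Finset.prod_congr rfl
    intro i _
    congr 3
    push_cast
    ring
  rw [h1, E_reindex t m, Matrix.charpoly_reindex, Matrix.charpoly_fromBlocks_zero₁₂,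
    hD t, hD (t+m), e1, e2]
  rw [mul_comm]
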